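/- Let G' be the layered graph on vertex set V × {1,2,3} built from an edge-weighted graph (G,w) by, for each edge {u,v} of G and each i ∈ {1,2}, adding edges {(u,i),(v,i+1)} and {(v,i),(u,i+1)} of weight w(u,v). Then for every edge {u,v} ∈ E(G), the minimum over paths from (u,1) to (v,3) in G' of the path weight equals the minimum over vertices c with {u,c},{c,v} ∈ E(G) of w(u,c) + w(c,v); consequently, G contains a triangle of negative total weight if and only if there exists {u,v} ∈ E(G) such that dist_{G'}((u,1),(v,3)) + w(u,v) < 0. -/

import Mathlib

/-- The layered (directed, layer-increasing) adjacency of the graph `G'` on `V × {1,2,3}`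
(layers indexed by `Fin 3`): for each edge `{a,b}` of `G` and each pair of consecutive layers,
`(a,i)` is joined to `(b,i+1)`. -/
def LAdj {V : Type} (G : SimpleGraph V) (p q : V × Fin 3) : Prop :=
  G.Adj p.1 q.1 ∧ ((p.2 = 0 ∧ q.2 = 1) ∨ (p.2 = 1 ∧ q.2 = 2))

/-- Total weight of a path in `G'`, given as its list of vertices: the sum of `w` over
consecutive pairs; each edge `{(a,i),(b,i+1)}` has weight `w a b`. -/
def listWeight {V : Type} (w : V → V → ℤ) : List (V × Fin 3) → ℤ
  | a :: b :: rest => w a.1 b.1 + listWeight w (b :: rest)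
  | _ => 0

/-- The set of weights of paths in `G'` from `(u,1)` to `(v,3)` (here layers `0` and `2` of
`Fin 3`): lists of vertices starting at `(u,0)`, ending at `(v,2)`, whose consecutive pairs
are adjacent in `G'`. -/
def pathWeights {V : Type} (G : SimpleGraph V) (w : V → V → ℤ) (u v : V) : Set ℤ :=
  {x | ∃ l : List (V × Fin 3), l.Chain' (LAdj G) ∧ l.head? = some (u, 0) ∧
        l.getLast? = some (v, 2) ∧ x = listWeight w l}

lemma pw_eq {V : Type} (G : SimpleGraph V) (w : V → V → ℤ) (u v : V) :
    pathWeights G w u v = {x : ℤ | ∃ c, G.Adj u c ∧ G.Adj c v ∧ x = w u c + w c v} := by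
  ext x
  constructor
  · rintro ⟨l, hc, hh, hl, hx⟩
    rcases l with _ | ⟨a, _ | ⟨b, _ | ⟨c, _ | ⟨d, rest⟩⟩⟩⟩
    · simp at hh
    · simp at hh hl
      rw [hh] at hl
      exact absurd (congrArg Prod.snd hl) (by simp)
    · simp at hh
      rw [List.Chain', List.isChain_cons_cons] at hc
      obtain ⟨⟨hadj, hlay⟩, -⟩ := hc
      subst hh
      simp [List.getLast?] at hl
      rcases hlay with ⟨h1, h2⟩ | ⟨h1, h2⟩
      · subst hl; exact absurd h2 (by simp)
      · exact absurd h1 (by simp)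
    · simp at hh
      rw [List.Chain', List.isChain_cons_cons, List.isChain_cons_cons] at hc
      obtain ⟨⟨hab, hlab⟩, ⟨hbc, hlbc⟩, -⟩ := hc
      subst hh
      simp [List.getLast?] at hl
      subst hl
      refine ⟨b.1, ?_, ?_, ?_⟩
      · exact hab
      · exact hbc
      · simp [listWeight] at hx; omega
    · exfalso
      simp at hh
      rw [List.Chain', List.isChain_cons_cons, List.isChain_cons_cons, List.isChain_cons_cons] at hc
      obtain ⟨⟨hab, hlab⟩, ⟨hbc, hlbc⟩, ⟨hcd, hlcd⟩, -⟩ := hc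
      subst hh
      rcases hlab with ⟨h1, h2⟩ | ⟨h1, h2⟩
      · rcases hlbc with ⟨h3, h4⟩ | ⟨h3, h4⟩
        · rw [h2] at h3; exact absurd h3 (by decide)
        · rcases hlcd with ⟨h5, h6⟩ | ⟨h5, h6⟩
          · rw [h4] at h5; exact absurd h5 (by decide)
          · rw [h4] at h5; exact absurd h5 (by decide)
      · exact absurd h1 (by simp)
  · rintro ⟨c, h1, h2, rfl⟩
    exact ⟨[(u, 0), (c, 1), (v, 2)], by
      simp [List.Chain', List.isChain_cons_cons, LAdj, h1, h2], rfl, rfl, by simp [listWeight]⟩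

/-- in the layered graph `G'` built from an edge-weighted graph `(G, w)`
(`w` symmetric), for every edge `{u,v}` of `G` the minimum weight of a path from `(u,1)` to
`(v,3)` equals the minimum of `w u c + w c v` over common neighbours `c` of `u` and `v`;
consequently `G` has a negative-weight triangle iff there is an edge `{u,v}` with
`dist_{G'}((u,1),(v,3)) + w u v < 0` (the distance being `+∞`, i.e. the condition failing,
when no such path exists). -/
theorem stmt19 {V : Type} [Fintype V] (G : SimpleGraph V) (w : V → V → ℤ)
    (hw : ∀ a b, w a b = w b a) :
    (∀ u v, G.Adj u v →
        sInf (pathWeights G w u v)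
          = sInf {x : ℤ | ∃ c, G.Adj u c ∧ G.Adj c v ∧ x = w u c + w c v}) ∧
      ((∃ a b c, G.Adj a b ∧ G.Adj b c ∧ G.Adj c a ∧ w a b + w b c + w c a < 0) ↔
        ∃ u v, G.Adj u v ∧ (pathWeights G w u v).Nonempty ∧
          sInf (pathWeights G w u v) + w u v < 0) := by
  have hfin : ∀ u v : V, (pathWeights G w u v).Finite := by
    intro u v
    rw [pw_eq]
    have : {x : ℤ | ∃ c, G.Adj u c ∧ G.Adj c v ∧ x = w u c + w c v}
        ⊆ (fun c => w u c + w c v) '' Set.univ := by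
      rintro x ⟨c, -, -, rfl⟩; exact ⟨c, trivial, rfl⟩
    exact ((Set.finite_univ.image _)).subset this
  constructor
  · intro u v _; rw [pw_eq]
  · constructor
    · rintro ⟨a, b, c, hab, hbc, hca, hneg⟩
      refine ⟨a, c, hca.symm, ?_, ?_⟩
      · rw [pw_eq]; exact ⟨w a b + w b c, b, hab, hbc, rfl⟩
      · have hmem : w a b + w b c ∈ pathWeights G w a c := by
          rw [pw_eq]; exact ⟨b, hab, hbc, rfl⟩
        have := csInf_le (hfin a c).bddBelow hmem
        have hrw : w a c = w c a := hw a c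
        omega
    · rintro ⟨u, v, huv, hne, hlt⟩
      have hmem := hne.csInf_mem (hfin u v)
      rw [pw_eq] at hmem hlt
      obtain ⟨c, h1, h2, heq⟩ := hmem
      refine ⟨u, c, v, h1, h2, huv.symm, ?_⟩
      have : w v u = w u v := hw v u
      omega
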